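/- arXiv:1905.04677 — 2 statements merged into one kernel-verified Lean document; each statement's English description precedes it below -/
import Mathlib

section
/- Let q be an odd prime power, k ≥ 2, ξ a non-square in F_q. Assuming the graph Γ^□(k,q) is vertex-transitive (its orthogonal group acts transitively on vertices), the neighborhood of every vertex of Γ^□(k,q) (k ≥ 3) induces a graph isomorphic to Γ^□(k-1,q), and hence by induction from the edgeless base case Γ^□(2,q), the graph Γ^□(k,q) contains no clique of size k. -/
open Finset

variable (F : Type) [Field F] [Fintype F]

instance {k : ℕ} : Finite (Projectivization F (Fin k → F)) :=
  Quotient.finite _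

noncomputable instance {k : ℕ} : Fintype (Projectivization F (Fin k → F)) := Fintype.ofFinite _

/-- The quadratic form `Q(x) = ξ x₁² + ∑_{i≥2} x_i²`. -/
def Qf (ξ : F) {k : ℕ} (x : Fin k → F) : F :=
  ∑ i : Fin k, (if (i : ℕ) = 0 then ξ else 1) * x i ^ 2

/-- The polarized bilinear form `β(x,y) = ξ x₁ y₁ + ∑_{i≥2} x_i y_i`. -/
def Bf (ξ : F) {k : ℕ} (x y : Fin k → F) : F :=
  ∑ i : Fin k, (if (i : ℕ) = 0 then ξ else 1) * x i * y i

/-- `X_□`: the set of points of `PG(k-1,q)` on which `Q` takes nonzero square values. -/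
def Xsq (ξ : F) (k : ℕ) : Set (Projectivization F (Fin k → F)) :=
  {v | Qf F ξ v.rep ≠ 0 ∧ IsSquare (Qf F ξ v.rep)}

/-- `X_⊠`: the set of points on which `Q` takes non-square values. -/
def Xns (ξ : F) (k : ℕ) : Set (Projectivization F (Fin k → F)) :=
  {v | ¬ IsSquare (Qf F ξ v.rep)}

/-- The graph `Γ^□(k,q)` on `X_□` with orthogonality adjacency. -/
def Gamma (ξ : F) (k : ℕ) : SimpleGraph (Xsq F ξ k) where
  Adj x y := x ≠ y ∧ Bf F ξ x.1.rep y.1.rep = 0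
  symm := by
    constructor
    rintro x y ⟨hne, h⟩
    refine ⟨hne.symm, ?_⟩
    rw [← h]
    exact Finset.sum_congr rfl fun i _ => by ring
  loopless := by constructor; rintro x ⟨hne, -⟩; exact hne rfl

noncomputable instance (ξ : F) (k : ℕ) : Fintype (Xsq F ξ k) := Fintype.ofFinite _
noncomputable instance (ξ : F) (k : ℕ) : DecidableRel (Gamma F ξ k).Adj := Classical.decRel _


namespace GammaAux

variable {F : Type} [Field F] [Fintype F]

lemma Bf_comm (ξ : F) {k : ℕ} (x y : Fin k → F) : Bf F ξ x y = Bf F ξ y x :=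
  Finset.sum_congr rfl fun i _ => by ring

lemma Bf_self (ξ : F) {k : ℕ} (x : Fin k → F) : Bf F ξ x x = Qf F ξ x :=
  Finset.sum_congr rfl fun i _ => by ring

lemma Qf_smul (ξ : F) {k : ℕ} (c : F) (x : Fin k → F) :
    Qf F ξ (c • x) = c ^ 2 * Qf F ξ x := by
  simp only [Qf, Finset.mul_sum, Pi.smul_apply, smul_eq_mul]
  exact Finset.sum_congr rfl fun i _ => by ring

lemma Bf_smul_left (ξ : F) {k : ℕ} (c : F) (x y : Fin k → F) :
    Bf F ξ (c • x) y = c * Bf F ξ x y := by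
  simp only [Bf, Finset.mul_sum, Pi.smul_apply, smul_eq_mul]
  exact Finset.sum_congr rfl fun i _ => by ring

lemma Bf_smul_right (ξ : F) {k : ℕ} (c : F) (x y : Fin k → F) :
    Bf F ξ x (c • y) = c * Bf F ξ x y := by
  simp only [Bf, Finset.mul_sum, Pi.smul_apply, smul_eq_mul]
  exact Finset.sum_congr rfl fun i _ => by ring

lemma rep_mk_spec {k : ℕ} (x : Fin k → F) (hx : x ≠ 0) :
    ∃ c : F, c ≠ 0 ∧ (Projectivization.mk F x hx).rep = c • x := by
  obtain ⟨a, ha⟩ := Projectivization.exists_smul_eq_mk_rep F x hx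
  exact ⟨(a : F), a.ne_zero, by rw [← ha, Units.smul_def]⟩

lemma isSquare_sq_mul {c : F} (hc : c ≠ 0) (a : F) : IsSquare (c ^ 2 * a) ↔ IsSquare a := by
  constructor
  · rintro ⟨r, hr⟩
    refine ⟨r / c, ?_⟩
    field_simp
    linear_combination hr
  · rintro ⟨r, hr⟩
    exact ⟨c * r, by rw [hr]; ring⟩

lemma mem_Xsq_mk {k : ℕ} (ξ : F) (x : Fin k → F) (hx : x ≠ 0) :
    Projectivization.mk F x hx ∈ Xsq F ξ k ↔ (Qf F ξ x ≠ 0 ∧ IsSquare (Qf F ξ x)) := by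
  obtain ⟨c, hc, hrep⟩ := rep_mk_spec x hx
  show (Qf F ξ _ ≠ 0 ∧ IsSquare (Qf F ξ _)) ↔ _
  rw [hrep, Qf_smul, isSquare_sq_mul hc]
  constructor
  · rintro ⟨h1, h2⟩
    exact ⟨fun h => h1 (by rw [h, mul_zero]), h2⟩
  · rintro ⟨h1, h2⟩
    exact ⟨mul_ne_zero (pow_ne_zero 2 hc) h1, h2⟩

lemma Qf_snoc {m : ℕ} (hm : m ≠ 0) (ξ : F) (x : Fin m → F) (t : F) :
    Qf F ξ (Fin.snoc x t) = Qf F ξ x + t ^ 2 := by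
  unfold Qf
  rw [Fin.sum_univ_castSucc]
  simp [hm]

lemma Bf_snoc {m : ℕ} (hm : m ≠ 0) (ξ : F) (x y : Fin m → F) (s t : F) :
    Bf F ξ (Fin.snoc x s) (Fin.snoc y t) = Bf F ξ x y + s * t := by
  unfold Bf
  rw [Fin.sum_univ_castSucc]
  simp [hm]

end GammaAux

namespace GammaAux

variable {F : Type} [Field F] [Fintype F]

lemma eq_of_det {a b : Fin 2 → F} (ha : a ≠ 0) (hb : b ≠ 0)
    (h : a 0 * b 1 - a 1 * b 0 = 0) : ∃ c : F, c ≠ 0 ∧ b = c • a := by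
  rcases eq_or_ne (a 0) 0 with h0 | h0
  · have h1 : a 1 ≠ 0 := by
      intro h1
      exact ha (funext fun i => by fin_cases i <;> assumption)
    have hb0 : b 0 = 0 := by
      have h2 : a 1 * b 0 = 0 := by rw [h0] at h; linear_combination -h
      rcases mul_eq_zero.1 h2 with h' | h'
      · exact absurd h' h1
      · exact h'
    have hba : b = (b 1 / a 1) • a := by
      funext i
      fin_cases i
      · simp [h0, hb0]
      · simp
        field_simp
    refine ⟨_, fun hc => hb ?_, hba⟩
    rw [hba, hc, zero_smul]
  · have hba : b = (b 0 / a 0) • a := by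
      funext i
      fin_cases i
      · simp
        field_simp
      · simp
        field_simp
        linear_combination h
    refine ⟨_, fun hc => hb ?_, hba⟩
    rw [hba, hc, zero_smul]

lemma dim2_identity (ξ : F) (a b : Fin 2 → F) :
    Qf F ξ a * Qf F ξ b = (Bf F ξ a b) ^ 2 + ξ * (a 0 * b 1 - a 1 * b 0) ^ 2 := by
  simp [Qf, Bf, Fin.sum_univ_two]
  ring

lemma no_adj_two (ξ : F) (hξ : ¬ IsSquare ξ) (x y : Xsq F ξ 2) :
    ¬ (Gamma F ξ 2).Adj x y := by
  rintro ⟨hne, hB⟩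
  set a := x.1.rep with haa
  set b := y.1.rep with hbb
  have ha := x.1.rep_nonzero
  have hb := y.1.rep_nonzero
  obtain ⟨hQa0, r, hr⟩ := x.2
  obtain ⟨hQb0, s, hs⟩ := y.2
  rw [← haa] at hr hQa0
  rw [← hbb] at hs hQb0
  have hd : a 0 * b 1 - a 1 * b 0 ≠ 0 := by
    intro hd
    obtain ⟨c, hc, hba⟩ := eq_of_det ha hb hd
    apply hne
    have hyx : y.1 = x.1 := by
      rw [← Projectivization.mk_rep x.1, ← Projectivization.mk_rep y.1,
        Projectivization.mk_eq_mk_iff']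
      exact ⟨c, hba.symm⟩
    exact (Subtype.ext hyx).symm
  have hid := dim2_identity ξ a b
  rw [hB] at hid
  have key : ξ * ((a 0 * b 1 - a 1 * b 0) * (a 0 * b 1 - a 1 * b 0)) = (r * s) * (r * s) := by
    linear_combination -hid + Qf F ξ b * hr + (r * r) * hs
  apply hξ
  refine ⟨r * s / (a 0 * b 1 - a 1 * b 0), ?_⟩
  field_simp
  linear_combination key
end GammaAux

namespace GammaAux

variable {F : Type} [Field F] [Fintype F]

lemma adj_of_B {n : ℕ} (ξ : F) (a b : Xsq F ξ n) (h : Bf F ξ a.1.rep b.1.rep = 0) :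
    (Gamma F ξ n).Adj a b := by
  refine ⟨fun he => ?_, h⟩
  rw [he, Bf_self] at h
  exact b.2.1 h

lemma snoc_zero_ne_zero {m : ℕ} {x : Fin m → F} (hx : x ≠ 0) :
    (Fin.snoc x 0 : Fin (m + 1) → F) ≠ 0 := by
  intro h
  apply hx
  funext i
  simpa using congrFun h i.castSucc

lemma init_ne_zero {m : ℕ} {w : Fin (m + 1) → F} (hw : w ≠ 0)
    (h0 : w (Fin.last m) = 0) : Fin.init w ≠ 0 := by
  intro h
  apply hw
  have hs : w = Fin.snoc (Fin.init w) (w (Fin.last m)) := (Fin.snoc_init_self w).symm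
  rw [hs, h, h0]
  funext i
  refine Fin.lastCases ?_ (fun j => ?_) i <;> simp

/-- Pad a vertex of `Γ(m)` to a vertex of `Γ(m+1)` by appending a zero coordinate. -/
noncomputable def padP (ξ : F) {m : ℕ} (hm : m ≠ 0) (v : Xsq F ξ m) : Xsq F ξ (m + 1) :=
  ⟨Projectivization.mk F (Fin.snoc v.1.rep 0) (snoc_zero_ne_zero v.1.rep_nonzero),
   (mem_Xsq_mk ξ _ _).mpr (by
     have h : Qf F ξ v.1.rep ≠ 0 ∧ IsSquare (Qf F ξ v.1.rep) := v.2
     rw [Qf_snoc hm]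
     simpa using h)⟩

lemma padP_rep (ξ : F) {m : ℕ} (hm : m ≠ 0) (v : Xsq F ξ m) :
    ∃ c : F, c ≠ 0 ∧ (padP ξ hm v).1.rep = c • (Fin.snoc v.1.rep 0 : Fin (m + 1) → F) :=
  rep_mk_spec _ (snoc_zero_ne_zero v.1.rep_nonzero)

lemma padP_rep_last (ξ : F) {m : ℕ} (hm : m ≠ 0) (v : Xsq F ξ m) :
    (padP ξ hm v).1.rep (Fin.last m) = 0 := by
  obtain ⟨c, hc, h⟩ := padP_rep ξ hm v
  rw [h]
  simp

/-- Cut the last (zero) coordinate of a vertex of `Γ(m+1)`. -/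
noncomputable def cutP (ξ : F) {m : ℕ} (hm : m ≠ 0) (w : Xsq F ξ (m + 1))
    (h0 : w.1.rep (Fin.last m) = 0) : Xsq F ξ m :=
  ⟨Projectivization.mk F (Fin.init w.1.rep) (init_ne_zero w.1.rep_nonzero h0),
   (mem_Xsq_mk ξ _ _).mpr (by
     have h : Qf F ξ w.1.rep ≠ 0 ∧ IsSquare (Qf F ξ w.1.rep) := w.2
     have e1 : (Fin.snoc (Fin.init w.1.rep) 0 : Fin (m + 1) → F) = w.1.rep := by
       rw [← h0]; exact Fin.snoc_init_self _
     rw [← e1, Qf_snoc hm] at h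
     simpa using h)⟩

lemma cutP_rep (ξ : F) {m : ℕ} (hm : m ≠ 0) (w : Xsq F ξ (m + 1))
    (h0 : w.1.rep (Fin.last m) = 0) :
    ∃ c : F, c ≠ 0 ∧ (cutP ξ hm w h0).1.rep = c • Fin.init w.1.rep :=
  rep_mk_spec _ (init_ne_zero w.1.rep_nonzero h0)

lemma cut_pad (ξ : F) {m : ℕ} (hm : m ≠ 0) (v : Xsq F ξ m)
    (h0 : (padP ξ hm v).1.rep (Fin.last m) = 0) :
    cutP ξ hm (padP ξ hm v) h0 = v := by
  obtain ⟨c, hc, hrep⟩ := padP_rep ξ hm v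
  apply Subtype.ext
  have hinit : Fin.init (padP ξ hm v).1.rep = c • v.1.rep := by
    rw [hrep]
    funext i
    simp [Fin.init]
  show Projectivization.mk F (Fin.init (padP ξ hm v).1.rep) _ = v.1
  conv_rhs => rw [← Projectivization.mk_rep v.1]
  rw [Projectivization.mk_eq_mk_iff']
  exact ⟨c, hinit.symm⟩

lemma pad_cut (ξ : F) {m : ℕ} (hm : m ≠ 0) (w : Xsq F ξ (m + 1))
    (h0 : w.1.rep (Fin.last m) = 0) :
    padP ξ hm (cutP ξ hm w h0) = w := by
  obtain ⟨c, hc, hrep⟩ := cutP_rep ξ hm w h0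
  apply Subtype.ext
  have hsn : (Fin.snoc (cutP ξ hm w h0).1.rep 0 : Fin (m + 1) → F) = c • w.1.rep := by
    rw [hrep]
    funext i
    refine Fin.lastCases ?_ (fun j => ?_) i
    · simp [h0]
    · simp [Fin.init]
  show Projectivization.mk F (Fin.snoc (cutP ξ hm w h0).1.rep 0 : Fin (m + 1) → F) _ = w.1
  conv_rhs => rw [← Projectivization.mk_rep w.1]
  rw [Projectivization.mk_eq_mk_iff']
  exact ⟨c, hsn.symm⟩

lemma Bf_pad_eq_zero_iff (ξ : F) {m : ℕ} (hm : m ≠ 0) (v₁ v₂ : Xsq F ξ m) :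
    Bf F ξ (padP ξ hm v₁).1.rep (padP ξ hm v₂).1.rep = 0 ↔
      Bf F ξ v₁.1.rep v₂.1.rep = 0 := by
  obtain ⟨c₁, hc₁, h₁⟩ := padP_rep ξ hm v₁
  obtain ⟨c₂, hc₂, h₂⟩ := padP_rep ξ hm v₂
  rw [h₁, h₂, Bf_smul_left, Bf_smul_right, Bf_snoc hm]
  simp [mul_eq_zero, hc₁, hc₂]

/-- The standard base vertex `⟨(0,…,0,1)⟩` of `Γ(m+1)`. -/
noncomputable def stdP (ξ : F) (m : ℕ) (hm : m ≠ 0) : Xsq F ξ (m + 1) :=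
  ⟨Projectivization.mk F (Fin.snoc (0 : Fin m → F) 1)
      (by intro h; simpa using congrFun h (Fin.last m)),
   (mem_Xsq_mk ξ _ _).mpr (by
     have h0 : Qf F ξ (0 : Fin m → F) = 0 := by simp [Qf]
     rw [Qf_snoc hm, h0]
     refine ⟨by norm_num, ?_⟩
     simpa using (isSquare_one : IsSquare (1 : F)))⟩

lemma stdP_rep (ξ : F) (m : ℕ) (hm : m ≠ 0) :
    ∃ c : F, c ≠ 0 ∧ (stdP ξ m hm).1.rep = c • (Fin.snoc (0 : Fin m → F) 1 : Fin (m + 1) → F) :=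
  rep_mk_spec _ (by intro h; simpa using congrFun h (Fin.last m))

lemma Bf_std (ξ : F) {m : ℕ} (hm : m ≠ 0) (w : Fin (m + 1) → F) :
    ∃ c : F, c ≠ 0 ∧ Bf F ξ (stdP ξ m hm).1.rep w = c * w (Fin.last m) := by
  obtain ⟨c, hc, h⟩ := stdP_rep ξ m hm
  refine ⟨c, hc, ?_⟩
  rw [h, Bf_smul_left]
  congr 1
  have hB0 : Bf F ξ (0 : Fin m → F) (Fin.init w) = 0 := by simp [Bf]
  calc Bf F ξ (Fin.snoc (0 : Fin m → F) 1) w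
      = Bf F ξ (Fin.snoc (0 : Fin m → F) 1) (Fin.snoc (Fin.init w) (w (Fin.last m))) := by
        rw [Fin.snoc_init_self]
    _ = w (Fin.last m) := by rw [Bf_snoc hm, hB0]; ring

lemma nbhd_iso_std (ξ : F) {m : ℕ} (hm2 : 2 ≤ m) :
    ∃ e : Xsq F ξ (m + 1),
      Nonempty ((SimpleGraph.induce ((Gamma F ξ (m + 1)).neighborSet e) (Gamma F ξ (m + 1))) ≃g
        Gamma F ξ m) := by
  have hm0 : m ≠ 0 := by omega
  refine ⟨stdP ξ m hm0, ⟨?_⟩⟩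
  have hlast : ∀ w : Xsq F ξ (m + 1),
      w ∈ (Gamma F ξ (m + 1)).neighborSet (stdP ξ m hm0) → w.1.rep (Fin.last m) = 0 := by
    intro w hw
    obtain ⟨c, hc, hB⟩ := Bf_std ξ hm0 w.1.rep
    have h2 : Bf F ξ (stdP ξ m hm0).1.rep w.1.rep = 0 := hw.2
    rw [hB] at h2
    exact (mul_eq_zero.1 h2).resolve_left hc
  have adjE : ∀ w : Xsq F ξ (m + 1), w.1.rep (Fin.last m) = 0 →
      w ∈ (Gamma F ξ (m + 1)).neighborSet (stdP ξ m hm0) := by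
    intro w h0
    obtain ⟨c, hc, hB⟩ := Bf_std ξ hm0 w.1.rep
    exact adj_of_B ξ _ _ (by rw [hB, h0, mul_zero])
  let E : Xsq F ξ m ≃ ((Gamma F ξ (m + 1)).neighborSet (stdP ξ m hm0) : Set _) :=
    { toFun := fun v => ⟨padP ξ hm0 v, adjE _ (padP_rep_last ξ hm0 v)⟩
      invFun := fun w => cutP ξ hm0 w.1 (hlast w.1 w.2)
      left_inv := fun v => cut_pad ξ hm0 v _
      right_inv := fun w => Subtype.ext (pad_cut ξ hm0 w.1 (hlast w.1 w.2)) }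
  refine SimpleGraph.Iso.symm ⟨E, ?_⟩
  intro a b
  have hinj : ∀ a b : Xsq F ξ m, padP ξ hm0 a = padP ξ hm0 b → a = b := by
    intro a b hab
    exact E.injective (Subtype.ext hab)
  show (Gamma F ξ (m + 1)).Adj (padP ξ hm0 a) (padP ξ hm0 b) ↔ (Gamma F ξ m).Adj a b
  constructor
  · rintro ⟨hne, hB⟩
    exact ⟨fun h => hne (by rw [h]), (Bf_pad_eq_zero_iff ξ hm0 a b).1 hB⟩
  · rintro ⟨hne, hB⟩
    exact ⟨fun h => hne (hinj a b h), (Bf_pad_eq_zero_iff ξ hm0 a b).2 hB⟩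

end GammaAux

open GammaAux

/-- Assuming the graphs `Γ^□(j,q)` are vertex-transitive, the neighborhood of every
vertex of `Γ^□(k,q)` (`k ≥ 3`) induces a subgraph isomorphic to `Γ^□(k-1,q)`, and hence,
by induction from the edgeless base case `Γ^□(2,q)`, the graph `Γ^□(k,q)` contains no
clique of size `k`. -/
theorem stmt_8 {F : Type} [Field F] [Fintype F] (hodd : Odd (Fintype.card F))
    (ξ : F) (hξ : ¬ IsSquare ξ) (k : ℕ) (hk : 2 ≤ k)
    (htrans : ∀ j : ℕ, 2 ≤ j → ∀ x y : Xsq F ξ j,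
      ∃ g : Gamma F ξ j ≃g Gamma F ξ j, g x = y) :
    (3 ≤ k → ∀ x₀ : Xsq F ξ k,
      Nonempty
        ((SimpleGraph.induce ((Gamma F ξ k).neighborSet x₀) (Gamma F ξ k)) ≃g
          Gamma F ξ (k - 1))) ∧
    (Gamma F ξ k).CliqueFree k := by
  classical
  have hnb : ∀ m : ℕ, 2 ≤ m → ∀ x₀ : Xsq F ξ (m + 1),
      Nonempty ((SimpleGraph.induce ((Gamma F ξ (m + 1)).neighborSet x₀)
        (Gamma F ξ (m + 1))) ≃g Gamma F ξ m) := by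
    intro m hm x₀
    obtain ⟨e, ⟨iso⟩⟩ := nbhd_iso_std ξ hm
    obtain ⟨g, hg⟩ := htrans (m + 1) (by omega) x₀ e
    refine ⟨SimpleGraph.Iso.comp iso ?_⟩
    refine ⟨(g.mapNeighborSet x₀).trans (Equiv.setCongr (by rw [hg])), ?_⟩
    intro a b
    show (Gamma F ξ (m + 1)).Adj (g a.1) (g b.1) ↔ (Gamma F ξ (m + 1)).Adj a.1 b.1
    exact g.map_adj_iff
  constructor
  · intro hk3 x₀
    obtain ⟨m, rfl⟩ : ∃ m, k = m + 1 := ⟨k - 1, by omega⟩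
    exact hnb m (by omega) x₀
  · induction k, hk using Nat.le_induction with
    | base =>
      have hbot : Gamma F ξ 2 = ⊥ := by
        ext x y
        simp only [SimpleGraph.bot_adj, iff_false]
        exact no_adj_two ξ hξ x y
      rw [hbot]
      exact SimpleGraph.cliqueFree_bot le_rfl
    | succ n hn ih =>
      by_contra h
      obtain f := SimpleGraph.topEmbeddingOfNotCliqueFree h
      set v := f (Fin.last n) with hv
      have hadj : ∀ i : Fin n, (Gamma F ξ (n + 1)).Adj v (f i.castSucc) := by
        intro i
        exact f.map_rel_iff.mpr (by simp [(Fin.castSucc_lt_last i).ne'])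
      let emb : (⊤ : SimpleGraph (Fin n)) ↪g
          (SimpleGraph.induce ((Gamma F ξ (n + 1)).neighborSet v) (Gamma F ξ (n + 1))) :=
        { toFun := fun i => ⟨f i.castSucc, hadj i⟩
          inj' := by
            intro i j hij
            exact Fin.castSucc_injective n (f.injective (congrArg Subtype.val hij))
          map_rel_iff' := by
            intro i j
            show (Gamma F ξ (n + 1)).Adj (f i.castSucc) (f j.castSucc) ↔ _
            rw [f.map_rel_iff]
            simp [Fin.castSucc_injective n |>.ne_iff] }
      obtain ⟨iso⟩ := hnb n hn v
      have hcf : (SimpleGraph.induce ((Gamma F ξ (n + 1)).neighborSet v)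
          (Gamma F ξ (n + 1))).CliqueFree n :=
        SimpleGraph.CliqueFree.comap iso.toEmbedding.isContained ih
      exact SimpleGraph.not_cliqueFree_of_top_embedding emb.isContained hcf
end

section
/- Any K_k-free d-regular graph on n vertices whose adjacency eigenvalues other than d are at most λ in absolute value, with λ ≤ C√d for a constant C and d ≤ n/2, satisfies d/n = O(n^{-1/(2k-3)}) (constant depending on k and C). -/
open Matrix Finset

variable {V : Type} [Fintype V] [DecidableEq V]

lemma stmt18_quad_lower {A : Matrix V V ℝ} (hA : A.IsHermitian) (c : ℝ)
    (hc : ∀ i, c ≤ hA.eigenvalues i) (x : V → ℝ) :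
    c * (x ⬝ᵥ x) ≤ x ⬝ᵥ (A *ᵥ x) := by
  classical
  set U : Matrix V V ℝ := (hA.eigenvectorUnitary : Matrix V V ℝ) with hU
  have hUU : U * star U = 1 := Matrix.mem_unitaryGroup_iff.mp hA.eigenvectorUnitary.2
  set y : V → ℝ := star U *ᵥ x with hy
  have hx : U *ᵥ y = x := by rw [hy, mulVec_mulVec, hUU, one_mulVec]
  have hdot : ∀ z : V → ℝ, x ⬝ᵥ (U *ᵥ z) = y ⬝ᵥ z := by
    intro z
    rw [hy, Matrix.dotProduct_mulVec, Matrix.star_eq_conjTranspose,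
      Matrix.conjTranspose_eq_transpose_of_trivial, Matrix.mulVec_transpose]
  have h1 : x ⬝ᵥ x = y ⬝ᵥ y := by
    rw [← hdot y, hx]
  have h2 : x ⬝ᵥ (A *ᵥ x) = ∑ i, hA.eigenvalues i * (y i)^2 := by
    conv_lhs => rw [hA.spectral_theorem, Unitary.conjStarAlgAut_apply, ← Matrix.mulVec_mulVec, ← Matrix.mulVec_mulVec, hdot]
    rw [dotProduct]
    congr 1; ext i
    rw [Matrix.mulVec_diagonal]
    simp [hy]
    ring
  rw [h1, h2, dotProduct, Finset.mul_sum]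
  refine Finset.sum_le_sum fun i _ => ?_
  have := hc i
  nlinarith [sq_nonneg (y i)]

lemma stmt18_step {G : SimpleGraph V} [DecidableRel G.Adj] {d : ℕ} {lam : ℝ}
    (hreg : G.IsRegularOfDegree d)
    (hquad : ∀ x : V → ℝ, -lam * (x ⬝ᵥ x) ≤ x ⬝ᵥ ((G.adjMatrix ℝ) *ᵥ x))
    (hlam0 : 0 ≤ lam)
    (U : Finset V) (hUne : U.Nonempty) :
    ∃ v ∈ U, (d : ℝ) / (Fintype.card V) * U.card - lam ≤ ((U.filter (G.Adj v)).card : ℝ) := by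
  classical
  have hV : Nonempty V := ⟨hUne.choose⟩
  set n : ℝ := (Fintype.card V : ℝ) with hn
  have hn0 : 0 < n := by
    have := Fintype.card_pos (α := V)
    positivity
  set u : ℝ := (U.card : ℝ) with hu
  have hu0 : 0 < u := by
    have := hUne.card_pos
    positivity
  set x : V → ℝ := fun v => if v ∈ U then (1:ℝ) else 0 with hxdef
  set c : ℝ := u / n with hc
  have hc0 : 0 ≤ c := by positivity
  have hcn : c * n = u := div_mul_cancel₀ u hn0.ne'
  set one : V → ℝ := fun _ => 1 with hone
  set y : V → ℝ := fun v => x v - c with hydef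
  set A : Matrix V V ℝ := G.adjMatrix ℝ with hA
  have hsumx : ∑ v, x v = u := by simp [hxdef, hu]
  have hxsq : ∀ v, x v * x v = x v := by
    intro v
    by_cases h : v ∈ U <;> simp [hxdef, h]
  have hxx : x ⬝ᵥ x = u := by
    simp only [dotProduct]
    rw [Finset.sum_congr rfl fun v _ => hxsq v, hsumx]
  have hsumy : ∑ v, y v = 0 := by
    simp only [hydef, Finset.sum_sub_distrib, hsumx, Finset.sum_const, nsmul_eq_mul]
    rw [Finset.card_univ, ← hn, mul_comm, hcn, sub_self]
  have hAone : A *ᵥ one = fun _ => (d : ℝ) := by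
    ext a
    rw [hA, SimpleGraph.adjMatrix_mulVec_apply]
    simp [hone, hreg a]
  have honeAy : one ⬝ᵥ (A *ᵥ y) = 0 := by
    rw [Matrix.dotProduct_mulVec, ← Matrix.mulVec_transpose, hA,
      SimpleGraph.transpose_adjMatrix, ← hA, hAone]
    simp only [dotProduct]
    rw [← Finset.mul_sum, hsumy, mul_zero]
  have hyy : y ⬝ᵥ y ≤ u := by
    have he : y ⬝ᵥ y = u - 2 * c * u + c * u := by
      simp only [dotProduct, hydef]
      have h2 : ∀ v, (x v - c) * (x v - c) = x v * x v - 2 * c * x v + c * c := fun v => by ring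
      rw [Finset.sum_congr rfl fun v _ => h2 v, Finset.sum_add_distrib,
        Finset.sum_sub_distrib, Finset.sum_congr rfl fun v _ => hxsq v, hsumx,
        ← Finset.mul_sum, hsumx, Finset.sum_const, nsmul_eq_mul, Finset.card_univ, ← hn]
      rw [show (n * (c * c) : ℝ) = c * (c * n) by ring, hcn]
    rw [he]
    nlinarith [mul_nonneg hc0 hu0.le]
  -- decompose the quadratic form
  have hxy : x = fun v => y v + c * one v := by
    ext v; simp [hydef, hone]
  have hAx : A *ᵥ x = fun v => (A *ᵥ y) v + c * d := by
    rw [hxy]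
    ext v
    have : (fun v => y v + c * one v) = y + c • one := by ext w; simp [hone]
    rw [this, Matrix.mulVec_add, Matrix.mulVec_smul, hAone]
    simp
  have hq : x ⬝ᵥ (A *ᵥ x) = y ⬝ᵥ (A *ᵥ y) + c * d * u := by
    rw [hAx]
    have : x ⬝ᵥ (fun v => (A *ᵥ y) v + c * d) =
        x ⬝ᵥ (A *ᵥ y) + (∑ v, x v) * (c * d) := by
      simp only [dotProduct, Finset.sum_mul, ← Finset.sum_add_distrib]
      congr 1; ext v; ring
    rw [this, hsumx]
    have hx2 : x ⬝ᵥ (A *ᵥ y) = y ⬝ᵥ (A *ᵥ y) + c * (one ⬝ᵥ (A *ᵥ y)) := by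
      simp only [dotProduct, hydef, hone, Finset.mul_sum, ← Finset.sum_add_distrib]
      congr 1; ext v; ring
    rw [hx2, honeAy]
    ring
  have hkey : u * ((d : ℝ) / n * u - lam) ≤ x ⬝ᵥ (A *ᵥ x) := by
    have h1 := hquad y
    have h2 : -lam * (y ⬝ᵥ y) ≥ -lam * u := by nlinarith
    have h3 : c * (d : ℝ) * u = (d : ℝ) / n * u * u := by rw [hc]; ring
    rw [hq]
    nlinarith [hquad y]
  -- identify the quadratic form with a sum of codegrees
  have hform : x ⬝ᵥ (A *ᵥ x) = ∑ a ∈ U, ((U.filter (G.Adj a)).card : ℝ) := by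
    simp only [dotProduct]
    rw [← Finset.sum_filter_add_sum_filter_not Finset.univ (fun v => v ∈ U)]
    have hz : ∑ a ∈ Finset.univ.filter (fun v => ¬ v ∈ U), x a * (A *ᵥ x) a = 0 := by
      apply Finset.sum_eq_zero
      intro a ha
      simp only [Finset.mem_filter] at ha
      simp [hxdef, ha.2]
    rw [hz, add_zero]
    have hUf : Finset.univ.filter (fun v => v ∈ U) = U := by
      ext a; simp
    rw [hUf]
    refine Finset.sum_congr rfl fun a ha => ?_
    rw [hA, SimpleGraph.adjMatrix_mulVec_apply]
    have : ∑ b ∈ G.neighborFinset a, x b = ((G.neighborFinset a ∩ U).card : ℝ) := by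
      rw [Finset.card_eq_sum_ones, Nat.cast_sum]
      rw [← Finset.sum_filter_add_sum_filter_not (G.neighborFinset a) (fun v => v ∈ U)]
      have : ∑ b ∈ (G.neighborFinset a).filter (fun v => ¬ v ∈ U), x b = 0 := by
        apply Finset.sum_eq_zero; intro b hb
        simp only [Finset.mem_filter] at hb
        simp [hxdef, hb.2]
      rw [this, add_zero]
      rw [show G.neighborFinset a ∩ U = (G.neighborFinset a).filter (fun v => v ∈ U) by
        ext b; simp [and_comm]]
      simp only [Nat.cast_one]
      apply Finset.sum_congr rfl
      intro b hb
      simp only [Finset.mem_filter] at hb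
      simp [hxdef, hb.2]
    rw [this]
    have : G.neighborFinset a ∩ U = U.filter (G.Adj a) := by
      ext b; simp [and_comm]
    rw [this]
    simp [hxdef, ha]
  rw [hform] at hkey
  have := Finset.exists_le_of_sum_le hUne (f := fun _ => (d : ℝ) / n * u - lam)
    (g := fun a => ((U.filter (G.Adj a)).card : ℝ)) ?_
  · obtain ⟨v, hv, hle⟩ := this
    exact ⟨v, hv, hle⟩
  · rw [Finset.sum_const, nsmul_eq_mul, ← hu]
    exact hkey

lemma stmt18_clique {G : SimpleGraph V} [DecidableRel G.Adj] {d : ℕ} {lam : ℝ}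
    (hreg : G.IsRegularOfDegree d)
    (hquad : ∀ x : V → ℝ, -lam * (x ⬝ᵥ x) ≤ x ⬝ᵥ ((G.adjMatrix ℝ) *ᵥ x))
    (hlam0 : 0 ≤ lam) (hn0 : 0 < Fintype.card V)
    (hdn : ((d : ℝ) / (Fintype.card V)) ≤ 1/2)
    {j : ℕ}
    (Hbig : 2 * lam + 1 ≤ ((d:ℝ)/(Fintype.card V))^j * Fintype.card V) :
    ∀ i ≤ j, ∃ S U : Finset V, G.IsNClique i S ∧
      (∀ u ∈ U, ∀ s ∈ S, G.Adj u s) ∧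
      ((d:ℝ)/(Fintype.card V))^i * (Fintype.card V) - 2*lam ≤ U.card := by
  set n : ℝ := (Fintype.card V : ℝ) with hn
  have hnpos : (0:ℝ) < n := by positivity
  set r : ℝ := (d:ℝ)/n with hr
  have hr0 : 0 ≤ r := by positivity
  have hr1 : r ≤ 1 := by rw [hr]; linarith
  have hmono : ∀ i ≤ j, r ^ j ≤ r ^ i := fun i hij => pow_le_pow_of_le_one hr0 hr1 hij
  have hcard1 : ∀ i ≤ j, (1:ℝ) ≤ r ^ i * n - 2 * lam := by
    intro i hij
    have := hmono i hij
    nlinarith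
  intro i
  induction i with
  | zero =>
    intro _
    refine ⟨∅, Finset.univ, ?_, by simp, ?_⟩
    · constructor
      · simp [SimpleGraph.IsClique]
      · simp
    · simp [← hn]
      nlinarith
  | succ i ih =>
    intro hij
    obtain ⟨S, U, hclique, hadj, hcard⟩ := ih (Nat.le_of_succ_le hij)
    have hUne : U.Nonempty := by
      rw [← Finset.card_pos]
      have h1 := hcard1 i (Nat.le_of_succ_le hij)
      by_contra h
      push_neg at h
      interval_cases hU : U.card
      · simp at hcard; linarith
    obtain ⟨v, hvU, hv⟩ := stmt18_step hreg hquad hlam0 U hUne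
    have hvS : ∀ s ∈ S, G.Adj v s := hadj v hvU
    have hvnotS : v ∉ S := fun h => G.irrefl (hvS v h)
    refine ⟨insert v S, U.filter (G.Adj v), ?_, ?_, ?_⟩
    · constructor
      · rw [Finset.coe_insert]
        apply hclique.1.insert
        intro b hb _
        exact hvS b hb
      · rw [Finset.card_insert_of_notMem hvnotS, hclique.2]
    · intro u hu s hs
      rw [Finset.mem_filter] at hu
      rw [Finset.mem_insert] at hs
      rcases hs with rfl | hs
      · exact hu.2.symm
      · exact hadj u hu.1 s hs
    · have hstep : r * (U.card : ℝ) - lam ≤ ((U.filter (G.Adj v)).card : ℝ) := hv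
      have h2 : r * (r ^ i * n - 2 * lam) ≤ r * U.card :=
        mul_le_mul_of_nonneg_left hcard hr0
      have hpow : r ^ (i+1) * n = r * (r ^ i * n) := by ring
      nlinarith [mul_nonneg hlam0 (by linarith : (0:ℝ) ≤ 1 - 2*r)]

/-- Any `K_k`-free `d`-regular graph on `n` vertices whose adjacency eigenvalues other
than `d` are at most `λ ≤ C√d` in absolute value, with `d ≤ n/2`, has edge density
`d/n = O(n^{-1/(2k-3)})`, the implied constant depending only on `k` and `C`. -/
theorem stmt_18 (k : ℕ) (hk : 3 ≤ k) (C : ℝ) (hC : 0 < C) :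
    ∃ K : ℝ, 0 < K ∧
      ∀ (V : Type) [Fintype V] (G : SimpleGraph V) [DecidableRel G.Adj] (d : ℕ) (lam : ℝ),
        G.CliqueFree k →
        G.IsRegularOfDegree d →
        d ≤ Fintype.card V / 2 →
        (∀ mu : ℝ, (∃ v, v ≠ 0 ∧ (SimpleGraph.adjMatrix ℝ G).mulVec v = mu • v) →
          mu = d ∨ |mu| ≤ lam) →
        lam ≤ C * Real.sqrt d →
        (d : ℝ) / Fintype.card V ≤
          K * (Fintype.card V : ℝ) ^ (-(1 : ℝ) / (2 * (k : ℝ) - 3)) := by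
  refine ⟨2*C+1, by linarith, ?_⟩
  intro V _ G _ d lam hfree hreg hd2 hmu hlamC
  classical
  have hk3 : (3:ℝ) ≤ (k:ℝ) := by exact_mod_cast hk
  have hden : (0:ℝ) < 2*(k:ℝ)-3 := by linarith
  rcases Nat.eq_zero_or_pos (Fintype.card V) with h0 | hn0
  · rw [h0]
    rw [Nat.cast_zero, div_zero, Real.zero_rpow (by
      apply div_ne_zero <;> [norm_num; linarith]), mul_zero]
  have hNpos : (0:ℝ) < (Fintype.card V : ℝ) := by positivity
  set N : ℝ := (Fintype.card V : ℝ) with hN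
  rcases Nat.eq_zero_or_pos d with hd0 | hd1
  · rw [hd0]
    rw [Nat.cast_zero, zero_div]
    have h1 : (0:ℝ) ≤ N ^ (-(1:ℝ)/(2*(k:ℝ)-3)) := Real.rpow_nonneg hNpos.le _
    nlinarith
  -- main case
  have h2d : 2 * d ≤ Fintype.card V := by
    have := (Nat.le_div_iff_mul_le (by norm_num : 0 < 2)).1 hd2
    omega
  have h2dR : 2 * (d:ℝ) ≤ N := by rw [hN]; exact_mod_cast h2d
  have hD1 : (1:ℝ) ≤ (d:ℝ) := by exact_mod_cast hd1
  set D : ℝ := (d:ℝ) with hD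
  set A : Matrix V V ℝ := G.adjMatrix ℝ with hAdef
  have hA : A.IsHermitian := by
    rw [Matrix.IsHermitian, Matrix.conjTranspose_eq_transpose_of_trivial]
    exact G.isSymm_adjMatrix
  have heigd : ∀ i, hA.eigenvalues i = (d:ℝ) ∨ |hA.eigenvalues i| ≤ lam := by
    intro i
    apply hmu
    refine ⟨⇑(hA.eigenvectorBasis i), ?_, hA.mulVec_eigenvectorBasis i⟩
    have hne := hA.eigenvectorBasis.orthonormal.ne_zero i
    intro h
    apply hne
    ext j
    exact congrFun h j
  have hVne : Nonempty V := Fintype.card_pos_iff.mp hn0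
  have hlam0 : 0 ≤ lam := by
    by_contra hneg
    push_neg at hneg
    have hall : ∀ i, (d:ℝ) ≤ hA.eigenvalues i := by
      intro i
      rcases heigd i with h | h
      · rw [h]
      · exfalso
        have := abs_nonneg (hA.eigenvalues i)
        linarith
    obtain ⟨v0⟩ := hVne
    have hq := stmt18_quad_lower hA (d:ℝ) hall (Pi.single v0 1)
    have e1 : (Pi.single v0 (1:ℝ)) ⬝ᵥ (Pi.single v0 (1:ℝ)) = 1 := by
      simp [dotProduct, Pi.single_apply]
    have e2 : (Pi.single v0 (1:ℝ)) ⬝ᵥ (A *ᵥ (Pi.single v0 (1:ℝ))) = 0 := by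
      simp only [dotProduct, Pi.single_apply, Matrix.mulVec, hAdef,
        SimpleGraph.adjMatrix_apply, ite_mul, one_mul, zero_mul, mul_ite, mul_one, mul_zero]
      refine Finset.sum_eq_zero fun x _ => ?_
      simp only [Finset.sum_ite_eq', Finset.mem_univ, if_true]
      split_ifs with h1 h2
      · subst h1; exact absurd h2 (G.irrefl)
      · rfl
      · rfl
    rw [e1, e2, mul_one] at hq
    linarith
  have heig : ∀ i, -lam ≤ hA.eigenvalues i := by
    intro i
    rcases heigd i with h | h
    · rw [h]; linarith
    · have := abs_le.1 h
      linarith [this.1]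
  have hquad : ∀ x : V → ℝ, -lam * (x ⬝ᵥ x) ≤ x ⬝ᵥ (A *ᵥ x) :=
    fun x => stmt18_quad_lower hA (-lam) heig x
  have hdn : D / N ≤ 1/2 := by
    rw [div_le_iff₀ hNpos]
    linarith
  have Hsmall : (D/N)^(k-1) * N < 2*lam + 1 := by
    by_contra hbig
    push_neg at hbig
    obtain ⟨S, U, hcl, hadj, hcard⟩ :=
      stmt18_clique hreg hquad hlam0 hn0 hdn (j := k-1) hbig (k-1) le_rfl
    have h1 : (1:ℝ) ≤ (U.card : ℝ) := by linarith
    have hUne : U.Nonempty := by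
      rw [← Finset.card_pos]
      exact_mod_cast lt_of_lt_of_le zero_lt_one h1
    obtain ⟨w, hw⟩ := hUne
    have hwS : ∀ s ∈ S, G.Adj w s := hadj w hw
    have hwnotS : w ∉ S := fun h => G.irrefl (hwS w h)
    refine hfree (insert w S) ⟨?_, ?_⟩
    · rw [Finset.coe_insert]
      apply hcl.1.insert
      intro b hb _
      exact hwS b hb
    · rw [Finset.card_insert_of_notMem hwnotS, hcl.2]
      omega
  -- arithmetic conversion
  have hsq1 : (1:ℝ) ≤ Real.sqrt D := by
    rw [show (1:ℝ) = Real.sqrt 1 by simp]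
    exact Real.sqrt_le_sqrt hD1
  have hchain : (D/N)^(k-1) * N < (2*C+1) * Real.sqrt D := by
    calc (D/N)^(k-1) * N < 2*lam + 1 := Hsmall
      _ ≤ 2*(C*Real.sqrt D) + 1 := by linarith
      _ ≤ (2*C+1) * Real.sqrt D := by nlinarith
  have hk1 : k - 1 = (k-2) + 1 := by omega
  have hexp : (D/N)^(k-1) * N = D^(k-1) / N^(k-2) := by
    rw [div_pow, hk1, pow_succ]
    field_simp
    ring
  rw [hexp] at hchain
  have hNk2 : (0:ℝ) < N^(k-2) := by positivity
  have hmainpow : D^(k-1) < (2*C+1) * Real.sqrt D * N^(k-2) := by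
    rw [div_lt_iff₀ hNk2] at hchain
    linarith
  -- move to rpow
  have hD0 : (0:ℝ) < D := by linarith
  set a : ℝ := (k:ℝ) - 3/2 with ha
  have hDk1 : D^(k-1) = D ^ a * D ^ (1/2 : ℝ) := by
    rw [← Real.rpow_natCast D (k-1), ← Real.rpow_add hD0]
    congr 1
    have : ((k-1 : ℕ) : ℝ) = (k:ℝ) - 1 := by
      rw [Nat.cast_sub (by omega)]
      norm_num
    rw [this, ha]
    ring
  have hNk2' : N^(k-2) = N ^ ((k:ℝ) - 2) := by
    rw [← Real.rpow_natCast N (k-2)]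
    congr 1
    rw [Nat.cast_sub (by omega)]
    norm_num
  have hsqrtD : Real.sqrt D = D ^ (1/2 : ℝ) := by
    rw [Real.sqrt_eq_rpow]
  have hDhalf : (0:ℝ) < D ^ (1/2 : ℝ) := Real.rpow_pos_of_pos hD0 _
  have hDa : D ^ a ≤ (2*C+1) * N ^ ((k:ℝ)-2) := by
    rw [hDk1, hsqrtD, hNk2'] at hmainpow
    have h := le_of_lt hmainpow
    rw [← mul_le_mul_iff_left₀ hDhalf]
    calc D ^ a * D ^ (1/2:ℝ) ≤ (2*C+1) * D ^ (1/2:ℝ) * N ^ ((k:ℝ)-2) := h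
      _ = (2*C+1) * N ^ ((k:ℝ)-2) * D ^ (1/2:ℝ) := by ring
  set t : ℝ := 2/(2*(k:ℝ)-3) with ht
  have ht0 : 0 < t := div_pos two_pos hden
  have hat : a * t = 1 := by rw [ha, ht]; rw [mul_div_assoc', div_eq_one_iff_eq hden.ne']; ring
  have hB1 : (1:ℝ) ≤ 2*C+1 := by linarith
  have hDle : D ≤ ((2*C+1) * N ^ ((k:ℝ)-2)) ^ t := by
    have h1 : (D ^ a) ^ t ≤ ((2*C+1) * N ^ ((k:ℝ)-2)) ^ t :=
      Real.rpow_le_rpow (Real.rpow_nonneg hD0.le _) hDa ht0.le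
    calc D = (D ^ a) ^ t := by rw [← Real.rpow_mul hD0.le, hat, Real.rpow_one]
      _ ≤ _ := h1
  have hsplit : ((2*C+1) * N ^ ((k:ℝ)-2)) ^ t = (2*C+1)^t * N ^ (((k:ℝ)-2)*t) := by
    rw [Real.mul_rpow (by linarith) (Real.rpow_nonneg hNpos.le _), ← Real.rpow_mul hNpos.le]
  have hBt : (2*C+1)^t ≤ 2*C+1 := by
    have ht1 : t ≤ 1 := by rw [ht, div_le_one hden]; linarith
    calc (2*C+1)^t ≤ (2*C+1)^(1:ℝ) := Real.rpow_le_rpow_of_exponent_le hB1 ht1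
      _ = 2*C+1 := Real.rpow_one _
  have hexp2 : ((k:ℝ)-2)*t = 1 + (-(1:ℝ)/(2*(k:ℝ)-3)) := by
    rw [ht]; rw [one_add_div hden.ne', mul_div_assoc', div_left_inj' hden.ne']; ring
  have hfin : D ≤ (2*C+1) * (N * N ^ (-(1:ℝ)/(2*(k:ℝ)-3))) := by
    calc D ≤ (2*C+1)^t * N ^ (((k:ℝ)-2)*t) := hsplit ▸ hDle
      _ ≤ (2*C+1) * N ^ (((k:ℝ)-2)*t) :=
        mul_le_mul_of_nonneg_right hBt (Real.rpow_nonneg hNpos.le _)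
      _ = (2*C+1) * (N * N ^ (-(1:ℝ)/(2*(k:ℝ)-3))) := by
        rw [hexp2, Real.rpow_add hNpos, Real.rpow_one]
  rw [div_le_iff₀ hNpos]
  have heq : (2*C+1) * (N * N ^ (-(1:ℝ)/(2*(k:ℝ)-3)))
      = (2*C+1) * N ^ (-(1:ℝ)/(2*(k:ℝ)-3)) * N := by ring
  linarith
end
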